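/- Every 2→1 hypergraph H on vertex set {1,...,n} in which every hyperedge ab→c satisfies c < max(a,b), and which contains at most one hyperedge per 3-element set, has at most binom(n,3) hyperedges; and the hypergraph consisting of one hyperedge ik→j for each triple i<j<k achieves binom(n,3) hyperedges while avoiding the configuration F = {12→3, 13→4, 23→5, 14→2, 25→1}. Hence ex_o(n, F) = binom(n,3). -/

import Mathlib

lemma sort3 {n : ℕ} {a b c : Fin n} (hab : a ≠ b) (hac : a ≠ c) (hbc : b ≠ c) :
    ∃ i j k : Fin n, i < j ∧ j < k ∧ ({i, j, k} : Finset (Fin n)) = {a, b, c} := by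
  rcases lt_or_gt_of_ne hab with h1 | h1 <;>
  rcases lt_or_gt_of_ne hac with h2 | h2 <;>
  rcases lt_or_gt_of_ne hbc with h3 | h3
  · exact ⟨a, b, c, h1, h3, rfl⟩
  · exact ⟨a, c, b, h2, h3, by ext x; simp; tauto⟩
  · exact absurd ((h2.trans h1).trans h3) (lt_irrefl c)
  · exact ⟨c, a, b, h2, h1, by ext x; simp; tauto⟩
  · exact ⟨b, a, c, h1, h2, by ext x; simp; tauto⟩
  · exact absurd ((h2.trans h3).trans h1) (lt_irrefl a)
  · exact ⟨b, c, a, h3, h2, by ext x; simp; tauto⟩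
  · exact ⟨c, b, a, h3, h1, by ext x; simp; tauto⟩

lemma betwE {n : ℕ} {E : Finset (Finset (Fin n) × Fin n)}
    (hE : ∀ e, e ∈ E ↔ ∃ i j k : Fin n, i < j ∧ j < k ∧
      e = (({i, k} : Finset (Fin n)), j))
    {x y z : Fin n} (h : (({x, y} : Finset (Fin n)), z) ∈ E) :
    (x < z ∧ z < y) ∨ (y < z ∧ z < x) := by
  obtain ⟨i, j, k, hij, hjk, heq⟩ := (hE _).1 h
  obtain ⟨hS, hz⟩ := Prod.mk.injEq .. ▸ heq
  subst hz
  have hx : x ∈ ({i, k} : Finset (Fin n)) := hS ▸ Finset.mem_insert_self x {y}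
  have hy : y ∈ ({i, k} : Finset (Fin n)) := hS ▸ Finset.mem_insert_of_mem (Finset.mem_singleton_self y)
  have hi : i ∈ ({x, y} : Finset (Fin n)) := hS ▸ Finset.mem_insert_self i {k}
  have hk : k ∈ ({x, y} : Finset (Fin n)) := hS ▸ Finset.mem_insert_of_mem (Finset.mem_singleton_self k)
  simp only [Finset.mem_insert, Finset.mem_singleton] at hx hy hi hk
  rcases hx with rfl | rfl
  · rcases hy with rfl | rfl
    · rcases hk with rfl | rfl <;> exact absurd hjk (lt_asymm hij)
    · exact Or.inl ⟨hij, hjk⟩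
  · rcases hy with rfl | rfl
    · exact Or.inr ⟨hij, hjk⟩
    · rcases hi with rfl | rfl <;> exact absurd hjk (lt_asymm hij)

theorem stmt19 (n : ℕ) (H : Finset (Finset (Fin n) × Fin n))
    (hedge : ∀ e ∈ H, e.1.card = 2 ∧ e.2 ∉ e.1)
    (hmax : ∀ a b c : Fin n, (({a, b} : Finset (Fin n)), c) ∈ H → c < max a b)
    (horient : ∀ e₁ ∈ H, ∀ e₂ ∈ H, insert e₁.2 e₁.1 = insert e₂.2 e₂.1 → e₁ = e₂)
    (E : Finset (Finset (Fin n) × Fin n))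
    (hE : ∀ e, e ∈ E ↔ ∃ i j k : Fin n, i < j ∧ j < k ∧
      e = (({i, k} : Finset (Fin n)), j)) :
    H.card ≤ Nat.choose n 3 ∧
    E.card = Nat.choose n 3 ∧
    ¬ ∃ v : Fin 5 → Fin n, Function.Injective v ∧
      (({v 0, v 1} : Finset (Fin n)), v 2) ∈ E ∧
      (({v 0, v 2} : Finset (Fin n)), v 3) ∈ E ∧
      (({v 1, v 2} : Finset (Fin n)), v 4) ∈ E ∧
      (({v 0, v 3} : Finset (Fin n)), v 1) ∈ E ∧
      (({v 1, v 4} : Finset (Fin n)), v 0) ∈ E := by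
  have hcardT : ((Finset.univ : Finset (Fin n)).powersetCard 3).card = Nat.choose n 3 := by
    rw [Finset.card_powersetCard, Finset.card_univ, Fintype.card_fin]
  refine ⟨?_, ?_, ?_⟩
  · -- upper bound
    rw [← hcardT]
    apply Finset.card_le_card_of_injOn (fun e => insert e.2 e.1)
    · intro e he
      rw [Finset.mem_coe, Finset.mem_powersetCard]
      refine ⟨Finset.subset_univ _, ?_⟩
      rw [Finset.card_insert_of_notMem (hedge e he).2, (hedge e he).1]
    · intro e₁ h₁ e₂ h₂ h
      exact horient e₁ (Finset.mem_coe.1 h₁) e₂ (Finset.mem_coe.1 h₂) h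
  · -- E achieves the bound
    rw [← hcardT]
    apply Finset.card_bij (fun e _ => insert e.2 e.1)
    · intro e he
      obtain ⟨i, j, k, hij, hjk, rfl⟩ := (hE e).1 he
      rw [Finset.mem_powersetCard]
      refine ⟨Finset.subset_univ _, ?_⟩
      have h1 : j ∉ ({i, k} : Finset (Fin n)) := by
        simp only [Finset.mem_insert, Finset.mem_singleton]
        rintro (rfl | rfl)
        · exact absurd hij (lt_irrefl _)
        · exact absurd hjk (lt_irrefl _)
      rw [Finset.card_insert_of_notMem h1]
      rw [Finset.card_insert_of_notMem (by simp [Fin.ne_of_lt (hij.trans hjk)]), Finset.card_singleton]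
    · intro e₁ h₁ e₂ h₂ h
      obtain ⟨i, j, k, hij, hjk, rfl⟩ := (hE e₁).1 h₁
      obtain ⟨i', j', k', hij', hjk', rfl⟩ := (hE e₂).1 h₂
      simp only at h
      have m1 : i' = j ∨ i' = i ∨ i' = k := by
        have : i' ∈ insert j ({i, k} : Finset (Fin n)) := by
          rw [h]; simp
        simpa using this
      have m2 : j' = j ∨ j' = i ∨ j' = k := by
        have : j' ∈ insert j ({i, k} : Finset (Fin n)) := by
          rw [h]; simp
        simpa using this
      have m3 : k' = j ∨ k' = i ∨ k' = k := by
        have : k' ∈ insert j ({i, k} : Finset (Fin n)) := by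
          rw [h]; simp
        simpa using this
      have m4 : i = j' ∨ i = i' ∨ i = k' := by
        have : i ∈ insert j' ({i', k'} : Finset (Fin n)) := by
          rw [← h]; simp
        simpa using this
      have m5 : j = j' ∨ j = i' ∨ j = k' := by
        have : j ∈ insert j' ({i', k'} : Finset (Fin n)) := by
          rw [← h]; simp
        simpa using this
      have m6 : k = j' ∨ k = i' ∨ k = k' := by
        have : k ∈ insert j' ({i', k'} : Finset (Fin n)) := by
          rw [← h]; simp
        simpa using this
      simp only [Fin.ext_iff, Fin.lt_def] at m1 m2 m3 m4 m5 m6 hij hjk hij' hjk'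
      have hi : i = i' := Fin.ext (by omega)
      have hj : j = j' := Fin.ext (by omega)
      have hk : k = k' := Fin.ext (by omega)
      rw [hi, hj, hk]
    · intro s hs
      rw [Finset.mem_powersetCard] at hs
      obtain ⟨a, b, c, hab, hac, hbc, rfl⟩ := Finset.card_eq_three.1 hs.2
      obtain ⟨i, j, k, hij, hjk, hset⟩ := sort3 hab hac hbc
      refine ⟨(({i, k} : Finset (Fin n)), j), (hE _).2 ⟨i, j, k, hij, hjk, rfl⟩, ?_⟩
      simp only
      rw [← hset]; ext x; simp; tauto
  · -- no copy of F
    rintro ⟨v, hinj, h1, h2, _, h4, _⟩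
    have b1 := betwE hE h1
    have b2 := betwE hE h2
    have b4 := betwE hE h4
    simp only [Fin.lt_def] at b1 b2 b4
    omega
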